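/- arXiv:math/0209060 — 4 statements merged into one kernel-verified Lean document; each statement's English description precedes it below -/
import Mathlib

section
/- Let M = ⊕_{r ∈ ℤ^k} M_r be a ℤ^k-graded commutative associative unital ℂ-algebra that is graded-simple (has no nonzero proper graded ideals) with each graded component M_r finite-dimensional over ℂ. Then M₀ ≅ ℂ, every nonzero homogeneous element of M is invertible, and each nonzero graded component M_r is one-dimensional; consequently M is isomorphic to a ℤ^k-graded subalgebra of ℂ[t₁^{±1},…,t_k^{±1}] in which every homogeneous element is invertible. -/
open DirectSum

section GSaux

set_option linter.unusedSectionVars false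

variable {k : ℕ} {M : Type*} [CommRing M] [Algebra ℂ M] [Nontrivial M]
  (𝒜 : (Fin k → ℤ) → Submodule ℂ M) [GradedAlgebra 𝒜]

theorem GSaux.isUnit
    (hsimple : ∀ I : Ideal M, Ideal.IsHomogeneous 𝒜 I → I = ⊥ ∨ I = ⊤)
    {r : Fin k → ℤ} {x : M} (hx : x ∈ 𝒜 r) (hne : x ≠ 0) : IsUnit x := by
  have hhom : (Ideal.span {x}).IsHomogeneous 𝒜 :=
    Ideal.homogeneous_span 𝒜 {x} (by
      rintro y hy
      rw [Set.mem_singleton_iff] at hy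
      exact ⟨r, hy ▸ hx⟩)
  rcases hsimple _ hhom with h | h
  · exfalso
    have hmem : x ∈ Ideal.span ({x} : Set M) := Ideal.subset_span rfl
    rw [h] at hmem
    exact hne (Ideal.mem_bot.mp hmem)
  · exact Ideal.span_singleton_eq_top.mp h

theorem GSaux.unit_inv_mem {r : Fin k → ℤ} (u : Mˣ) (hx : (↑u : M) ∈ 𝒜 r) :
    (↑u⁻¹ : M) ∈ 𝒜 (-r) := by
  have h1 : (↑u : M) * (DirectSum.decompose 𝒜 (↑u⁻¹ : M) (-r) : M) = 1 := by
    have h := DirectSum.coe_decompose_mul_add_of_left_mem (𝒜 := 𝒜) (j := -r)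
      (b := (↑u⁻¹ : M)) hx
    rw [← h, Units.mul_inv, add_neg_cancel]
    exact DirectSum.decompose_of_mem_same 𝒜 SetLike.GradedOne.one_mem
  have h2 : (↑u⁻¹ : M) = (DirectSum.decompose 𝒜 (↑u⁻¹ : M) (-r) : M) :=
    Units.inv_eq_of_mul_eq_one_right h1
  rw [h2]
  exact Submodule.coe_mem _

end GSaux

/-- A `ℤᵏ`-graded commutative associative unital `ℂ`-algebra `M` which is
graded-simple (no nonzero proper homogeneous ideals) and has all graded
components finite-dimensional satisfies: `M₀ ≅ ℂ` (it is one-dimensional),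
every nonzero homogeneous element is invertible, each nonzero graded component
is one-dimensional, and `M` embeds as a `ℤᵏ`-graded subalgebra of
`ℂ[t₁^{±1},…,t_k^{±1}]` in which every nonzero homogeneous element is
invertible. -/
theorem graded_simple_commutative_algebra_embeds_in_laurent
    (k : ℕ) (M : Type*) [CommRing M] [Algebra ℂ M] [Nontrivial M]
    (𝒜 : (Fin k → ℤ) → Submodule ℂ M) [GradedAlgebra 𝒜]
    (hfd : ∀ r, FiniteDimensional ℂ (𝒜 r))
    (hsimple : ∀ I : Ideal M, Ideal.IsHomogeneous 𝒜 I → I = ⊥ ∨ I = ⊤) :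
    Module.finrank ℂ (𝒜 0) = 1 ∧
    (∀ (r : Fin k → ℤ) (x : M), x ∈ 𝒜 r → x ≠ 0 → IsUnit x) ∧
    (∀ r : Fin k → ℤ, Module.finrank ℂ (𝒜 r) ≤ 1) ∧
    (∃ f : M →ₐ[ℂ] AddMonoidAlgebra ℂ (Fin k → ℤ),
      Function.Injective f ∧
      (∀ (r : Fin k → ℤ) (x : M), x ∈ 𝒜 r →
        ∃ c : ℂ, f x = AddMonoidAlgebra.single r c) ∧
      (∀ (r : Fin k → ℤ) (x : M), x ∈ 𝒜 r → x ≠ 0 →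
        ∃ y : M, y ∈ 𝒜 (-r) ∧ x * y = 1)) := by
  classical
  have h1mem : (1 : M) ∈ 𝒜 0 := SetLike.GradedOne.one_mem
  have hunit : ∀ (r : Fin k → ℤ) (x : M), x ∈ 𝒜 r → x ≠ 0 → IsUnit x :=
    fun r x hx hne => GSaux.isUnit 𝒜 hsimple hx hne
  have hinv : ∀ (r : Fin k → ℤ) (x : M), x ∈ 𝒜 r → x ≠ 0 →
      ∃ y : M, y ∈ 𝒜 (-r) ∧ x * y = 1 := by
    intro r x hx hne
    obtain ⟨u, rfl⟩ := hunit r x hx hne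
    exact ⟨↑u⁻¹, GSaux.unit_inv_mem 𝒜 u hx, u.mul_inv⟩
  -- `𝒜 0` is one-dimensional
  have hrank0 : Module.finrank ℂ (𝒜 0) = 1 := by
    set A0 := SetLike.GradeZero.subalgebra 𝒜 with hA0
    have hA0sub : Subalgebra.toSubmodule A0 = 𝒜 0 := by
      ext x; exact Iff.rfl
    let le : (𝒜 0) ≃ₗ[ℂ] A0 :=
      (LinearEquiv.ofEq _ _ hA0sub.symm).trans (Subalgebra.toSubmoduleEquiv A0)
    haveI : FiniteDimensional ℂ (𝒜 0) := hfd 0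
    haveI : FiniteDimensional ℂ A0 := Module.Finite.equiv le
    haveI : Nontrivial A0 :=
      ⟨⟨0, 1, fun h => zero_ne_one (congrArg Subtype.val h)⟩⟩
    have hfield : IsField A0 := by
      refine ⟨Nontrivial.exists_pair_ne, mul_comm, ?_⟩
      intro a ha
      have hane : (a : M) ≠ 0 := fun h => ha (Subtype.ext h)
      obtain ⟨y, hy, hxy⟩ := hinv 0 (a : M) a.2 hane
      rw [neg_zero] at hy
      exact ⟨⟨y, hy⟩, Subtype.ext (by simpa using hxy)⟩
    letI := hfield.toField
    haveI : Algebra.IsIntegral ℂ A0 := Algebra.IsIntegral.of_finite ℂ A0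
    have hsurj : Function.Surjective (algebraMap ℂ A0) :=
      IsAlgClosed.algebraMap_bijective_of_isIntegral.2
    have hbij : Function.Bijective (algebraMap ℂ A0) :=
      ⟨(algebraMap ℂ A0).injective, hsurj⟩
    have heq : Module.finrank ℂ A0 = 1 := by
      have h := (LinearEquiv.ofBijective (Algebra.linearMap ℂ A0) hbij).finrank_eq
      simpa using h.symm
    rw [le.finrank_eq]
    exact heq
  -- every graded component is at most one-dimensional
  have hrankle : ∀ r, Module.finrank ℂ (𝒜 r) ≤ 1 := by
    intro r
    by_cases hbot : 𝒜 r = ⊥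
    · rw [hbot, finrank_bot]; omega
    · obtain ⟨x, hx, hxne⟩ := (Submodule.ne_bot_iff _).mp hbot
      obtain ⟨y, hy, hxy⟩ := hinv r x hx hxne
      have hyx : y * x = 1 := by rw [mul_comm]; exact hxy
      let L : 𝒜 r →ₗ[ℂ] 𝒜 0 :=
        { toFun := fun z => ⟨(z : M) * y, by
            have h := SetLike.mul_mem_graded z.2 hy
            rwa [add_neg_cancel] at h⟩
          map_add' := fun a b => Subtype.ext (by simp [add_mul])
          map_smul' := fun cc a => Subtype.ext (by simp [smul_mul_assoc]) }
      have hinj : Function.Injective L := by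
        intro a b hab
        have h1 : (a : M) * y = (b : M) * y := congrArg Subtype.val hab
        have h2 : (a : M) = (b : M) := by
          have ha : (a : M) = (a : M) * y * x := by rw [mul_assoc, hyx, mul_one]
          have hb : (b : M) = (b : M) * y * x := by rw [mul_assoc, hyx, mul_one]
          rw [ha, hb, h1]
        exact Subtype.ext h2
      haveI : FiniteDimensional ℂ (𝒜 0) := hfd 0
      have hle := LinearMap.finrank_le_finrank_of_injective hinj
      rwa [hrank0] at hle
  refine ⟨hrank0, hunit, hrankle, ?_⟩
  -- the additive group of homogeneous units, and a splitting of the degree map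
  let H : AddSubgroup ((Fin k → ℤ) × Additive Mˣ) :=
    { carrier := {p | ((Additive.toMul p.2 : Mˣ) : M) ∈ 𝒜 p.1}
      zero_mem' := by simpa using h1mem
      add_mem' := by
        rintro ⟨r, u⟩ ⟨s, v⟩ hu hv
        simpa using SetLike.mul_mem_graded hu hv
      neg_mem' := by
        rintro ⟨r, u⟩ hu
        simpa using GSaux.unit_inv_mem 𝒜 (Additive.toMul u) hu }
  let HS : Submodule ℤ ((Fin k → ℤ) × Additive Mˣ) := AddSubgroup.toIntSubmodule H
  let π : HS →ₗ[ℤ] (Fin k → ℤ) := (LinearMap.fst ℤ (Fin k → ℤ) (Additive Mˣ)).comp HS.subtype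
  let S : Submodule ℤ (Fin k → ℤ) := LinearMap.range π
  obtain ⟨n, bS⟩ := Submodule.basisOfPid (Pi.basisFun ℤ (Fin k)) S
  haveI : Module.Free ℤ S := Module.Free.of_basis bS
  obtain ⟨σ, hσ⟩ := Module.projective_lifting_property π.rangeRestrict LinearMap.id
    π.surjective_rangeRestrict
  have hπσ : ∀ s : S, π (σ s) = (s : Fin k → ℤ) := fun s =>
    congrArg Subtype.val (LinearMap.congr_fun hσ s)
  let e : (Fin k → ℤ) → Mˣ := fun r =>
    if h : r ∈ S then Additive.toMul ((σ ⟨r, h⟩ : HS) : (Fin k → ℤ) × Additive Mˣ).2 else 1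
  have hSmem : ∀ (r : Fin k → ℤ) (x : M), x ∈ 𝒜 r → x ≠ 0 → r ∈ S := by
    intro r x hx hne
    obtain ⟨u, hu⟩ := hunit r x hx hne
    refine ⟨⟨(r, Additive.ofMul u), ?_⟩, rfl⟩
    show ((Additive.toMul (Additive.ofMul u) : Mˣ) : M) ∈ 𝒜 r
    simpa [hu]
  have hemem : ∀ (r : Fin k → ℤ), r ∈ S → ((e r : Mˣ) : M) ∈ 𝒜 r := by
    intro r h
    have hmem' : ((Additive.toMul ((σ ⟨r, h⟩ : HS) : (Fin k → ℤ) × Additive Mˣ).2 : Mˣ) : M)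
        ∈ 𝒜 ((σ ⟨r, h⟩ : HS) : (Fin k → ℤ) × Additive Mˣ).1 := (σ ⟨r, h⟩).2
    have h1 : ((σ ⟨r, h⟩ : HS) : (Fin k → ℤ) × Additive Mˣ).1 = r := hπσ ⟨r, h⟩
    rw [h1] at hmem'
    simpa [e, h] using hmem'
  have hemul : ∀ (r s : Fin k → ℤ), r ∈ S → s ∈ S →
      ((e r : Mˣ) : M) * ((e s : Mˣ) : M) = ((e (r + s) : Mˣ) : M) := by
    intro r s hr hs
    have hrs : r + s ∈ S := add_mem hr hs
    have hadd : (⟨r + s, hrs⟩ : S) = ⟨r, hr⟩ + ⟨s, hs⟩ := by ext; rfl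
    simp only [e, dif_pos hr, dif_pos hs, dif_pos hrs, hadd, map_add]
    rfl
  have he0 : ((e 0 : Mˣ) : M) = 1 := by
    have h0 : (0 : Fin k → ℤ) ∈ S := zero_mem _
    have hz : (⟨(0 : Fin k → ℤ), h0⟩ : S) = 0 := rfl
    simp only [e, dif_pos h0, hz, map_zero]
    rfl
  -- coefficient functionals
  have hcoeff : ∀ r : Fin k → ℤ, ∃ c : (𝒜 r) →ₗ[ℂ] ℂ,
      ∀ z : 𝒜 r, (z : M) = c z • ((e r : Mˣ) : M) := by
    intro r
    by_cases h : r ∈ S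
    · haveI := hfd r
      have hmem := hemem r h
      have hne : (⟨((e r : Mˣ) : M), hmem⟩ : 𝒜 r) ≠ 0 := by
        intro hz
        exact (e r).ne_zero (congrArg Subtype.val hz)
      haveI : Nontrivial (𝒜 r) := nontrivial_of_ne _ 0 hne
      have hrk : Module.finrank ℂ (𝒜 r) = 1 :=
        le_antisymm (hrankle r) (Module.finrank_pos_iff.mpr ‹Nontrivial (𝒜 r)›)
      let b := FiniteDimensional.basisSingleton Unit hrk
        (⟨((e r : Mˣ) : M), hmem⟩ : 𝒜 r) hne
      refine ⟨b.coord default, fun z => ?_⟩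
      have hz : z = b.repr z default • b default := by
        have hs := b.sum_repr z
        simpa using hs.symm
      have hb : b default = ⟨((e r : Mˣ) : M), hmem⟩ :=
        FiniteDimensional.basisSingleton_apply Unit hrk _ hne default
      calc (z : M) = ((b.repr z default • b default : 𝒜 r) : M) := by rw [← hz]
        _ = b.repr z default • ((b default : 𝒜 r) : M) := rfl
        _ = b.coord default z • ((e r : Mˣ) : M) := by rw [hb, Module.Basis.coord_apply]
    · have hbot : 𝒜 r = ⊥ := by
        by_contra hb
        obtain ⟨x, hx, hxne⟩ := (Submodule.ne_bot_iff _).mp hb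
        exact h (hSmem r x hx hxne)
      refine ⟨0, fun z => ?_⟩
      have hz : (z : M) = 0 := by
        have h2 : 𝒜 r ≤ ⊥ := le_of_eq hbot
        simpa using h2 z.2
      simp [hz]
  choose c hc using hcoeff
  -- scalar cancellation against units
  have hsmul_cancel : ∀ (a b : ℂ) (u : Mˣ), a • (u : M) = b • (u : M) → a = b := by
    intro a b u h
    have h2 : (a - b) • (u : M) = 0 := by rw [sub_smul, h, sub_self]
    rw [Algebra.smul_def] at h2
    have h3 : algebraMap ℂ M (a - b) = 0 := (Units.mul_left_eq_zero u).mp h2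
    have h4 : a - b = 0 := (algebraMap ℂ M).injective (by rw [map_zero]; exact h3)
    exact sub_eq_zero.mp h4
  -- the linear map to the Laurent polynomial algebra
  let G : (⨁ r, 𝒜 r) →ₗ[ℂ] AddMonoidAlgebra ℂ (Fin k → ℤ) :=
    DirectSum.toModule ℂ _ _ (fun r => (AddMonoidAlgebra.lsingle r).comp (c r))
  let F : M →ₗ[ℂ] AddMonoidAlgebra ℂ (Fin k → ℤ) :=
    G.comp (DirectSum.decomposeAlgEquiv 𝒜).toLinearMap
  have hF : ∀ (r : Fin k → ℤ) (x : M) (hx : x ∈ 𝒜 r),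
      F x = AddMonoidAlgebra.single r (c r ⟨x, hx⟩) := by
    intro r x hx
    show G ((DirectSum.decomposeAlgEquiv 𝒜) x) = _
    have h1 : (DirectSum.decomposeAlgEquiv 𝒜) x = DirectSum.decompose 𝒜 x := rfl
    rw [h1, DirectSum.decompose_of_mem 𝒜 hx, ← DirectSum.lof_eq_of ℂ,
      DirectSum.toModule_lof]
    rfl
  have hF1 : F 1 = 1 := by
    rw [hF 0 1 h1mem]
    have hc1 : c 0 ⟨1, h1mem⟩ = 1 := by
      apply hsmul_cancel _ _ (e 0)
      rw [← hc 0 ⟨1, h1mem⟩, one_smul, he0]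
    rw [hc1]
    rfl
  have hFmul : ∀ a b : M, F (a * b) = F a * F b := by
    have key : ∀ (r s : Fin k → ℤ) (x y : M), x ∈ 𝒜 r → y ∈ 𝒜 s →
        F (x * y) = F x * F y := by
      intro r s x y hx hy
      by_cases hx0 : x = 0
      · simp [hx0]
      by_cases hy0 : y = 0
      · simp [hy0]
      have hr : r ∈ S := hSmem r x hx hx0
      have hs : s ∈ S := hSmem s y hy hy0
      have hxy : x * y ∈ 𝒜 (r + s) := SetLike.mul_mem_graded hx hy
      rw [hF r x hx, hF s y hy, hF (r + s) (x * y) hxy,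
        AddMonoidAlgebra.single_mul_single]
      congr 1
      apply hsmul_cancel _ _ (e (r + s))
      rw [← hc (r + s) ⟨x * y, hxy⟩]
      rw [← hemul r s hr hs, ← smul_mul_smul_comm]
      rw [← hc r ⟨x, hx⟩, ← hc s ⟨y, hy⟩]
    intro a
    refine DirectSum.Decomposition.inductionOn 𝒜
      (motive := fun a => ∀ b, F (a * b) = F a * F b) (by intro b; simp) ?_ ?_ a
    · intro r xr
      refine DirectSum.Decomposition.inductionOn 𝒜
        (motive := fun b => F (↑xr * b) = F ↑xr * F b) (by simp) ?_ ?_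
      · intro s ys
        exact key r s _ _ xr.2 ys.2
      · intro m m' hm hm'
        simp only [mul_add, map_add, hm, hm']
    · intro m m' hm hm' b
      simp only [add_mul, map_add, hm b, hm' b]
  -- injectivity
  have hcoord : ∀ (x : M) (r : Fin k → ℤ),
      (F x).coeff r = c r (DirectSum.decompose 𝒜 x r) := by
    intro x
    refine DirectSum.Decomposition.inductionOn 𝒜
      (motive := fun x => ∀ r, (F x).coeff r = c r (DirectSum.decompose 𝒜 x r)) ?_ ?_ ?_ x
    · intro r; simp
    · intro s zs r
      have h1 : F ↑zs = AddMonoidAlgebra.single s (c s ⟨(zs : M), zs.2⟩) := hF s zs zs.2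
      rw [h1, AddMonoidAlgebra.coeff_single, DirectSum.decompose_coe]
      by_cases hrs : s = r
      · subst hrs
        rw [Finsupp.single_eq_same, DirectSum.of_eq_same]
      · rw [Finsupp.single_eq_of_ne' hrs, DirectSum.of_eq_of_ne _ _ _ (Ne.symm hrs), map_zero]
    · intro m m' hm hm' r
      rw [map_add, AddMonoidAlgebra.coeff_add, Finsupp.add_apply, hm r, hm' r, DirectSum.decompose_add,
        DirectSum.add_apply, map_add]
  have hcinj : ∀ (r : Fin k → ℤ) (z : 𝒜 r), c r z = 0 → z = 0 := by
    intro r z hz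
    have h1 := hc r z
    rw [hz, zero_smul] at h1
    exact Subtype.ext h1
  have hFinj : Function.Injective F := by
    intro x y hxy
    have h0 : F (x - y) = 0 := by rw [map_sub, hxy, sub_self]
    have hz : ∀ r, DirectSum.decompose 𝒜 (x - y) r = 0 := by
      intro r
      apply hcinj r
      rw [← hcoord (x - y) r, h0]
      rfl
    have hsub : x - y = 0 := by
      conv_lhs => rw [← DirectSum.sum_support_decompose 𝒜 (x - y)]
      exact Finset.sum_eq_zero fun i _ => by rw [hz i]; rfl
    exact sub_eq_zero.mp hsub
  refine ⟨AlgHom.ofLinearMap F hF1 hFmul, hFinj, ?_, hinv⟩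
  intro r x hx
  exact ⟨c r ⟨x, hx⟩, hF r x hx⟩
end

section
/- Let H be an abelian group and A = ℂ[t₁^{±1},…,t_n^{±1}] with its standard ℤ^n-grading. Let ψ̄ : H → A be a map whose image A_ψ is a ℤ^n-graded subalgebra. Then A_ψ is an irreducible module over the abelian Lie algebra h̃_A (acting by multiplication through ψ̄ together with the degree derivations d₁,…,d_n) if and only if each nonzero homogeneous element of A_ψ is invertible in A_ψ. -/
/-- The degree derivation `dᵢ` on `A = ℂ[t₁^{±1},…,t_n^{±1}]`, acting by
`dᵢ(t^m) = mᵢ t^m`. -/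
noncomputable def degreeDerivation (n : ℕ) (i : Fin n)
    (f : AddMonoidAlgebra ℂ (Fin n → ℤ)) : AddMonoidAlgebra ℂ (Fin n → ℤ) :=
  f.coeff.sum fun m c => AddMonoidAlgebra.single m ((m i : ℂ) * c)

lemma degDer_apply (n : ℕ) (i : Fin n) (f : AddMonoidAlgebra ℂ (Fin n → ℤ))
    (m : Fin n → ℤ) : (degreeDerivation n i f).coeff m = (m i : ℂ) * f.coeff m := by
  classical
  unfold degreeDerivation
  rw [AddMonoidAlgebra.coeff_finsuppSum, Finsupp.sum_apply, Finsupp.sum]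
  simp only [AddMonoidAlgebra.coeff_single, Finsupp.single_apply]
  rw [Finset.sum_ite_eq' f.coeff.support m fun a => (a i : ℂ) * f.coeff a]
  split_ifs with h
  · rfl
  · rw [Finsupp.notMem_support_iff.mp h, mul_zero]

lemma degDer_mem (n : ℕ) (B : Subalgebra ℂ (AddMonoidAlgebra ℂ (Fin n → ℤ)))
    (hgr : ∀ f ∈ B, ∀ m : Fin n → ℤ, AddMonoidAlgebra.single m (f.coeff m) ∈ B)
    (i : Fin n) (b : AddMonoidAlgebra ℂ (Fin n → ℤ)) (hb : b ∈ B) :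
    degreeDerivation n i b ∈ B := by
  unfold degreeDerivation
  rw [Finsupp.sum]
  apply sum_mem
  intro m _
  have h : AddMonoidAlgebra.single m ((m i : ℂ) * b.coeff m)
      = (m i : ℂ) • AddMonoidAlgebra.single m (b.coeff m) := by
    rw [AddMonoidAlgebra.smul_single']
  rw [h]
  exact B.smul_mem (hgr b hb m) _

lemma degDer_single_mul (n : ℕ) (i : Fin n) (m : Fin n → ℤ) (c : ℂ)
    (b : AddMonoidAlgebra ℂ (Fin n → ℤ)) :
    degreeDerivation n i (AddMonoidAlgebra.single m c * b)
      = (m i : ℂ) • (AddMonoidAlgebra.single m c * b)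
        + AddMonoidAlgebra.single m c * degreeDerivation n i b := by
  ext x
  rw [degDer_apply, AddMonoidAlgebra.coeff_add, Finsupp.add_apply, AddMonoidAlgebra.coeff_smul,
    Finsupp.smul_apply, smul_eq_mul,
    AddMonoidAlgebra.coeff_single_mul_apply, AddMonoidAlgebra.coeff_single_mul_apply,
    degDer_apply]
  simp only [Pi.add_apply, Pi.neg_apply]
  push_cast
  ring

/-- A submodule invariant under the degree derivations contains the homogeneous
components of each of its elements. -/
lemma components_mem (n : ℕ) (W : Submodule ℂ (AddMonoidAlgebra ℂ (Fin n → ℤ)))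
    (hder : ∀ i : Fin n, ∀ w ∈ W, degreeDerivation n i w ∈ W) :
    ∀ k : ℕ, ∀ w ∈ W, w.coeff.support.card ≤ k →
      ∀ m : Fin n → ℤ, AddMonoidAlgebra.single m (w.coeff m) ∈ W := by
  classical
  intro k
  induction k with
  | zero =>
      intro w hw hcard m
      have hsupp : w.coeff.support = ∅ := Finset.card_eq_zero.mp (Nat.le_zero.mp hcard)
      have : w = 0 := AddMonoidAlgebra.coeff_eq_zero.mp (Finsupp.support_eq_empty.mp hsupp)
      subst this
      simp only [AddMonoidAlgebra.coeff_zero, Finsupp.coe_zero, Pi.zero_apply,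
        AddMonoidAlgebra.single_zero]
      exact W.zero_mem
  | succ k ih =>
      intro w hw hcard m
      by_cases hm : w.coeff m = 0
      · rw [hm]
        simp only [AddMonoidAlgebra.single_zero]
        exact W.zero_mem
      by_cases hsub : w.coeff.support ⊆ {m}
      · have : w = AddMonoidAlgebra.single m (w.coeff m) :=
          AddMonoidAlgebra.coeff_injective (Finsupp.support_subset_singleton.mp hsub)
        rw [← this]; exact hw
      · obtain ⟨m', hm's, hm'ne⟩ := Finset.not_subset.mp hsub
        rw [Finset.mem_singleton] at hm'ne
        obtain ⟨i, hi⟩ := Function.ne_iff.mp hm'ne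
        set w' := degreeDerivation n i w - (m' i : ℂ) • w with hw'def
        have hw'W : w' ∈ W := W.sub_mem (hder i w hw) (W.smul_mem _ hw)
        have happ : ∀ x, w'.coeff x = ((x i : ℂ) - (m' i : ℂ)) * w.coeff x := by
          intro x
          rw [hw'def, AddMonoidAlgebra.coeff_sub, Finsupp.sub_apply, AddMonoidAlgebra.coeff_smul,
            Finsupp.smul_apply, smul_eq_mul,
            degDer_apply, sub_mul]
        have hsupp : w'.coeff.support ⊆ w.coeff.support.erase m' := by
          intro x hx
          rw [Finsupp.mem_support_iff, happ] at hx
          rw [Finset.mem_erase, Finsupp.mem_support_iff]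
          refine ⟨?_, fun h => hx (by rw [h, mul_zero])⟩
          intro h
          apply hx
          rw [h, sub_self, zero_mul]
        have hcard' : w'.coeff.support.card ≤ k := by
          have h1 := Finset.card_le_card hsupp
          have h2 := Finset.card_erase_of_mem hm's
          omega
        have hkey := ih w' hw'W hcard' m
        rw [happ m] at hkey
        have hne0 : ((m i : ℂ) - (m' i : ℂ)) ≠ 0 := by
          rw [sub_ne_zero]
          exact_mod_cast Ne.symm hi
        have hsc := W.smul_mem (((m i : ℂ) - (m' i : ℂ))⁻¹) hkey
        rw [AddMonoidAlgebra.smul_single', ← mul_assoc, inv_mul_cancel₀ hne0,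
          one_mul] at hsc
        exact hsc

/-- Lemma 3.1: let `B = A_ψ̄` be a `ℤⁿ`-graded subalgebra of
`A = ℂ[t₁^{±1},…,t_n^{±1}]` (i.e. `B` contains the homogeneous components of
each of its elements).  Then `B` is an irreducible module over the abelian Lie
algebra `h̃_A` — acting on `B` by multiplication by elements of `B` together
with the degree derivations `d₁,…,d_n` — if and only if every nonzero
homogeneous element of `B` is invertible in `B`. -/
theorem graded_subalgebra_irreducible_iff_homogeneous_invertible
    (n : ℕ) (B : Subalgebra ℂ (AddMonoidAlgebra ℂ (Fin n → ℤ)))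
    (hgr : ∀ f ∈ B, ∀ m : Fin n → ℤ, AddMonoidAlgebra.single m (f.coeff m) ∈ B) :
    (∀ W : Submodule ℂ (AddMonoidAlgebra ℂ (Fin n → ℤ)),
        W ≤ Subalgebra.toSubmodule B → W ≠ ⊥ →
        (∀ b ∈ B, ∀ w ∈ W, b * w ∈ W) →
        (∀ i : Fin n, ∀ w ∈ W, degreeDerivation n i w ∈ W) →
        W = Subalgebra.toSubmodule B)
    ↔ (∀ (m : Fin n → ℤ) (c : ℂ), AddMonoidAlgebra.single m c ∈ B → c ≠ 0 →
        ∃ y ∈ B, AddMonoidAlgebra.single m c * y = 1) := by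
  constructor
  · intro hirr m c hmem hc
    set x := AddMonoidAlgebra.single m c with hx
    set W := Submodule.map (LinearMap.mulLeft ℂ x) (Subalgebra.toSubmodule B)
      with hWdef
    have hmem' : ∀ z, z ∈ W ↔ ∃ b ∈ B, x * b = z := by
      intro z
      simp [hWdef, Submodule.mem_map, LinearMap.mulLeft_apply]
    have hle : W ≤ Subalgebra.toSubmodule B := by
      intro z hz
      obtain ⟨b, hb, rfl⟩ := (hmem' z).mp hz
      exact B.mul_mem hmem hb
    have hxW : x ∈ W := (hmem' x).mpr ⟨1, B.one_mem, mul_one x⟩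
    have hne : W ≠ ⊥ := by
      intro h
      have hx0 : x = 0 := by rw [h] at hxW; simpa using hxW
      exact AddMonoidAlgebra.single_eq_zero.mp hx0 |> hc
    have hmul : ∀ b ∈ B, ∀ w ∈ W, b * w ∈ W := by
      intro b hb w hw
      obtain ⟨w', hw', rfl⟩ := (hmem' w).mp hw
      exact (hmem' _).mpr ⟨b * w', B.mul_mem hb hw', (mul_left_comm x b w' ▸ rfl :
        x * (b * w') = b * (x * w'))⟩
    have hder : ∀ i : Fin n, ∀ w ∈ W, degreeDerivation n i w ∈ W := by
      intro i w hw
      obtain ⟨b, hb, rfl⟩ := (hmem' w).mp hw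
      rw [hx, degDer_single_mul]
      exact W.add_mem (W.smul_mem _ ((hmem' _).mpr ⟨b, hb, rfl⟩))
        ((hmem' _).mpr ⟨degreeDerivation n i b, degDer_mem n B hgr i b hb, rfl⟩)
    have heq := hirr W hle hne hmul hder
    have h1 : (1 : AddMonoidAlgebra ℂ (Fin n → ℤ)) ∈ W := by
      rw [heq]; exact B.one_mem
    obtain ⟨y, hy, hxy⟩ := (hmem' 1).mp h1
    exact ⟨y, hy, hxy⟩
  · intro hinv W hle hne hmul hder
    refine le_antisymm hle ?_
    obtain ⟨w, hwW, hw0⟩ := Submodule.ne_bot_iff W |>.mp hne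
    obtain ⟨m, hm⟩ := Finsupp.support_nonempty_iff.mpr (mt AddMonoidAlgebra.coeff_eq_zero.mp hw0)
    have hxW : AddMonoidAlgebra.single m (w.coeff m) ∈ W :=
      components_mem n W hder w.coeff.support.card w hwW le_rfl m
    have hxB : AddMonoidAlgebra.single m (w.coeff m) ∈ B := hle hxW
    obtain ⟨y, hyB, hxy⟩ := hinv m (w.coeff m) hxB (Finsupp.mem_support_iff.mp hm)
    have h1 : (1 : AddMonoidAlgebra ℂ (Fin n → ℤ)) ∈ W := by
      have := hmul y hyB _ hxW
      rwa [mul_comm, hxy] at this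
    intro b hb
    have := hmul b hb 1 h1
    rwa [mul_one] at this
end

section
/- Let V be an irreducible module for the toroidal Lie algebra τ with finite-dimensional weight spaces, and let z₁, z₂ be central operators of the same degree m with z₁ ≠ 0 on V. Then z₂ = k z₁ for some constant k ∈ ℂ. In particular, in each degree the space of central operators acting nonzero on V is at most one-dimensional modulo the kernel. -/
set_option maxHeartbeats 1000000
set_option synthInstance.maxHeartbeats 1000000


/-- Let `V` be an irreducible module for the toroidal Lie algebra `τ` with
finite-dimensional weight spaces `Vg r` (`r ∈ ℤⁿ`), and let `z₁, z₂` be (the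
actions of) two central operators of the same degree `m` — they shift the
grading by `m` and commute with every `x ∈ τ` up to the same scalar multiple
of themselves.  If `z₁ ≠ 0` on `V`, then `z₂ = k z₁` for some constant
`k ∈ ℂ`; in particular in each degree the central operators acting nonzero on
`V` form an (at most) one-dimensional family. -/
theorem central_operators_same_degree_proportional
    (n : ℕ) (τ V : Type*) [LieRing τ] [LieAlgebra ℂ τ]
    [AddCommGroup V] [Module ℂ V] [LieRingModule τ V] [LieModule ℂ τ V]
    [LieModule.IsIrreducible ℂ τ V]
    (m : Fin n → ℤ) (z₁ z₂ : V →ₗ[ℂ] V)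
    (Vg : (Fin n → ℤ) → Submodule ℂ V)
    (hint : DirectSum.IsInternal Vg)
    (hfd : ∀ r, FiniteDimensional ℂ (Vg r))
    (hdeg₁ : ∀ r : Fin n → ℤ, ∀ v ∈ Vg r, z₁ v ∈ Vg (r + m))
    (hdeg₂ : ∀ r : Fin n → ℤ, ∀ v ∈ Vg r, z₂ v ∈ Vg (r + m))
    (hsemi : ∀ x : τ, ∃ c : ℂ,
      (∀ v : V, z₁ ⁅x, v⁆ = ⁅x, z₁ v⁆ + c • z₁ v) ∧
      (∀ v : V, z₂ ⁅x, v⁆ = ⁅x, z₂ v⁆ + c • z₂ v))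
    (hnz : ∃ v : V, z₁ v ≠ 0) :
    ∃ k : ℂ, z₂ = k • z₁ := by
  classical
  haveI hdec : DirectSum.Decomposition Vg := hint.chooseDecomposition
  obtain ⟨v₀, hv₀⟩ := hnz
  -- the kernel of `z₁` is a Lie submodule
  let K₁ : LieSubmodule ℂ τ V :=
    { LinearMap.ker z₁ with
      lie_mem := by
        intro x v hv
        obtain ⟨c, h1, -⟩ := hsemi x
        have hv' : z₁ v = 0 := hv
        show z₁ ⁅x, v⁆ = 0
        rw [h1 v, hv', lie_zero, smul_zero, add_zero] }
  have hK₁ : K₁ = ⊥ := by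
    rcases (IsSimpleOrder.eq_bot_or_eq_top K₁) with h | h
    · exact h
    · exfalso
      have : v₀ ∈ K₁ := h ▸ LieSubmodule.mem_top v₀
      exact hv₀ this
  have hinj : Function.Injective z₁ := by
    rw [← LinearMap.ker_eq_bot]
    ext v
    constructor
    · intro hv
      have : v ∈ K₁ := hv
      rw [hK₁] at this
      exact this
    · intro hv
      simp only [Submodule.mem_bot] at hv
      simp [hv]
  -- the range of `z₁` is a Lie submodule
  let R₁ : LieSubmodule ℂ τ V :=
    { LinearMap.range z₁ with
      lie_mem := by
        intro x w hw
        obtain ⟨c, h1, -⟩ := hsemi x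
        obtain ⟨v, rfl⟩ := hw
        show ∃ u, z₁ u = ⁅x, z₁ v⁆
        refine ⟨⁅x, v⁆ - c • v, ?_⟩
        rw [map_sub, map_smul, h1 v]
        abel
      : LieSubmodule ℂ τ V }
  have hR₁ : R₁ = ⊤ := by
    rcases (IsSimpleOrder.eq_bot_or_eq_top R₁) with h | h
    · exfalso
      have : z₁ v₀ ∈ R₁ := ⟨v₀, rfl⟩
      rw [h] at this
      exact hv₀ this
    · exact h
  have hsurj : Function.Surjective z₁ := by
    intro w
    have : w ∈ R₁ := hR₁ ▸ LieSubmodule.mem_top w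
    exact this
  let e : V ≃ₗ[ℂ] V := LinearEquiv.ofBijective z₁ ⟨hinj, hsurj⟩
  have he : ∀ v : V, e v = z₁ v := fun v => rfl
  -- `z₁⁻¹` is also graded: if `z₁ u ∈ Vg (r + m)` then `u ∈ Vg r`.
  have hinv : ∀ (r : Fin n → ℤ) (u : V), z₁ u ∈ Vg (r + m) → u ∈ Vg r := by
    intro r u hu
    -- the projection onto `Vg r` (resp. `Vg (r+m)`)
    set P : V → V := fun y => (DirectSum.decompose Vg y r : V) with hP
    set P' : V → V := fun y => (DirectSum.decompose Vg y (r + m) : V) with hP'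
    have hgr : ∀ y : V, z₁ (P y) = P' (z₁ y) := by
      intro y
      have hy : y ∈ ⨆ s, Vg s := by rw [hint.submodule_iSup_eq_top]; trivial
      refine Submodule.iSup_induction (motive := fun y => z₁ (P y) = P' (z₁ y)) Vg hy ?_ ?_ ?_
      · intro s v hv
        by_cases hs : s = r
        · subst hs
          simp only [hP, hP']
          rw [DirectSum.decompose_of_mem_same Vg hv,
            DirectSum.decompose_of_mem_same Vg (hdeg₁ s v hv)]
        · simp only [hP, hP']
          rw [DirectSum.decompose_of_mem_ne Vg hv hs,
            DirectSum.decompose_of_mem_ne Vg (hdeg₁ s v hv)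
              (fun h => hs (by simpa using congrArg (fun t => t - m) h)), map_zero]
      · simp only [hP, hP', DirectSum.decompose_zero, DirectSum.zero_apply,
          ZeroMemClass.coe_zero, map_zero]
      · intro a b ha hb
        simp only [hP, hP'] at ha hb ⊢
        simp only [DirectSum.decompose_add, DirectSum.add_apply, Submodule.coe_add,
          map_add, ha, hb]
    have h1 : z₁ (P u) = z₁ u := by
      rw [hgr u, hP']
      exact DirectSum.decompose_of_mem_same Vg hu
    have h2 : P u = u := hinj h1
    rw [← h2, hP]
    exact (DirectSum.decompose Vg u r).2
  -- find a nonzero weight space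
  have hv₀' : v₀ ≠ 0 := fun h => hv₀ (by simp [h])
  obtain ⟨r₀, hr₀⟩ : ∃ r, DirectSum.decompose Vg v₀ r ≠ 0 := by
    by_contra h
    push_neg at h
    apply hv₀'
    calc v₀ = ∑ r ∈ (DirectSum.decompose Vg v₀).support,
          ((DirectSum.decompose Vg v₀ r : Vg r) : V) :=
        (DirectSum.sum_support_decompose Vg v₀).symm
      _ = 0 := Finset.sum_eq_zero fun r _ => by rw [h r]; rfl
  haveI : Nontrivial (Vg r₀) :=
    ⟨DirectSum.decompose Vg v₀ r₀, 0, hr₀⟩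
  haveI := hfd r₀
  -- `T = z₂ ∘ z₁⁻¹` preserves `Vg r₀`
  let T : V →ₗ[ℂ] V := z₂ ∘ₗ (e.symm : V →ₗ[ℂ] V)
  have hTz : ∀ w : V, T w = z₂ (e.symm w) := fun w => rfl
  have hpre : ∀ w ∈ Vg r₀, T w ∈ Vg r₀ := by
    intro w hw
    have h1 : z₁ (e.symm w) = w := by
      have := e.apply_symm_apply w
      rwa [he] at this
    have h2 : e.symm w ∈ Vg (r₀ - m) := by
      apply hinv
      rw [h1]
      have : r₀ - m + m = r₀ := by ext i; simp
      rw [this]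
      exact hw
    have h3 := hdeg₂ _ _ h2
    have : r₀ - m + m = r₀ := by ext i; simp
    rwa [this] at h3
  let T' : Module.End ℂ (Vg r₀) := T.restrict hpre
  obtain ⟨k, hk⟩ := Module.End.exists_eigenvalue T'
  obtain ⟨w, hw⟩ := hk.exists_hasEigenvector
  refine ⟨k, ?_⟩
  -- `ker (z₂ - k • z₁)` is a nonzero Lie submodule, hence everything
  let D : V →ₗ[ℂ] V := z₂ - k • z₁
  let KD : LieSubmodule ℂ τ V :=
    { LinearMap.ker D with
      lie_mem := by
        intro x v hv
        obtain ⟨c, h1, h2⟩ := hsemi x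
        have hv' : z₂ v - k • z₁ v = 0 := hv
        show z₂ ⁅x, v⁆ - k • z₁ ⁅x, v⁆ = 0
        rw [h1 v, h2 v]
        have hz : z₂ v = k • z₁ v := by
          rw [← sub_eq_zero]; exact hv'
        rw [hz, smul_add, smul_comm k c, lie_smul]
        abel }
  have hu : (e.symm (w : V)) ∈ KD := by
    show z₂ (e.symm (w : V)) - k • z₁ (e.symm (w : V)) = 0
    have h1 : z₁ (e.symm (w : V)) = (w : V) := by
      have := e.apply_symm_apply (w : V)
      rwa [he] at this
    have h2 : z₂ (e.symm (w : V)) = k • (w : V) := by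
      rw [← hTz]
      have h3 : T (w : V) = ((T' w : Vg r₀) : V) := rfl
      rw [h3, hw.apply_eq_smul]
      rfl
    rw [h1, h2, sub_self]
  have hune : (e.symm (w : V)) ≠ 0 := by
    intro h
    apply hw.2
    have : (w : V) = 0 := by
      have := congrArg e h
      rwa [e.apply_symm_apply, map_zero] at this
    exact Subtype.coe_injective this
  have hKD : KD = ⊤ := by
    rcases (IsSimpleOrder.eq_bot_or_eq_top KD) with h | h
    · exfalso
      rw [h] at hu
      exact hune hu
    · exact h
  ext v
  have : v ∈ KD := hKD ▸ LieSubmodule.mem_top v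
  have hv : z₂ v - k • z₁ v = 0 := this
  have := sub_eq_zero.mp hv
  simpa using this
end

section
/- Let H be a finite-dimensional complex vector space with a nondegenerate symmetric bilinear form (,), and let L(H) = H ⊗ ℂ[t,t^{−1}] ⊕ ℂc be the associated Heisenberg Lie algebra with bracket [h⊗t^m, h′⊗t^ℓ] = (h,h′) m δ_{m+ℓ,0} c and c central. Let V be a ℤ-graded L(H)-module with finite-dimensional graded components on which c acts by a nonzero scalar. Then V contains a nonzero graded vector v with H ⊗ t^n · v = 0 for all n > 0, or a nonzero graded vector v with H ⊗ t^n · v = 0 for all n < 0. -/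
open Module LinearMap Function

/-- Abstract setup: a family of rescaled Weyl pairs `(X μ, Y μ)` indexed by modes `μ`,
pairwise commuting between distinct modes, acting on a `ℤ`-graded space with
`X μ` of degree `δ μ` and `Y μ` of degree `-δ μ`. -/
structure HSetup (V : Type*) [AddCommGroup V] [Module ℂ V] (M : Type*) where
  Vg : ℤ → Submodule ℂ V
  δ : M → ℤ
  X : M → Module.End ℂ V
  Y : M → Module.End ℂ V
  hfd : ∀ k, FiniteDimensional ℂ (Vg k)
  hδ : ∀ μ, 1 ≤ δ μ
  hW : ∀ μ, X μ * Y μ - Y μ * X μ = 1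
  hCXX : ∀ ⦃μ μ'⦄, μ ≠ μ' → Commute (X μ) (X μ')
  hCXY : ∀ ⦃μ μ'⦄, μ ≠ μ' → Commute (X μ) (Y μ')
  hCYY : ∀ ⦃μ μ'⦄, μ ≠ μ' → Commute (Y μ) (Y μ')
  hGX : ∀ μ k, ∀ v ∈ Vg k, X μ v ∈ Vg (k + δ μ)
  hGY : ∀ μ k, ∀ v ∈ Vg k, Y μ v ∈ Vg (k - δ μ)

namespace HSetup

variable {V : Type*} [AddCommGroup V] [Module ℂ V] {M : Type*} (S : HSetup V M)

/-- The number operator of mode `μ`. -/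
def N (μ : M) : Module.End ℂ V := S.Y μ * S.X μ

/-- The generalized eigenspace of the number operator. -/
def mge (μ : M) (γ : ℂ) : Submodule ℂ V := (S.N μ).maxGenEigenspace γ

lemma XY_eq (μ : M) : S.X μ * S.Y μ = 1 + S.N μ := by
  have := S.hW μ
  rw [sub_eq_iff_eq_add] at this
  rw [this, N]

lemma N_mul_X (μ : M) : S.N μ * S.X μ = S.X μ * S.N μ - S.X μ := by
  have h : S.X μ * S.N μ = (S.X μ * S.Y μ) * S.X μ := by rw [N]; noncomm_ring
  rw [h, XY_eq]; noncomm_ring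

lemma N_mul_Y (μ : M) : S.N μ * S.Y μ = S.Y μ * S.N μ + S.Y μ := by
  have h : S.N μ * S.Y μ = S.Y μ * (S.X μ * S.Y μ) := by rw [N]; noncomm_ring
  rw [h, XY_eq]; noncomm_ring

lemma commute_X_N {μ μ' : M} (h : μ ≠ μ') : Commute (S.X μ) (S.N μ') :=
  ((S.hCXY h).symm.mul_left ((S.hCXX h).symm)).symm

lemma commute_Y_N {μ μ' : M} (h : μ ≠ μ') : Commute (S.Y μ) (S.N μ') :=
  ((S.hCYY h).symm.mul_left ((S.hCXY h.symm))).symm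

lemma commute_N_N {μ μ' : M} (h : μ ≠ μ') : Commute (S.N μ) (S.N μ') :=
  (S.commute_Y_N h).mul_left (S.commute_X_N h)

/-- Key conjugation lemma. -/
lemma mem_mge_map {A : Module.End ℂ V} {f g : Module.End ℂ V} {c c' : ℂ}
    (h : (f - c • 1) * A = A * (g - c' • 1)) {v : V}
    (hv : v ∈ g.maxGenEigenspace c') : A v ∈ f.maxGenEigenspace c := by
  rw [Module.End.mem_maxGenEigenspace] at hv ⊢
  obtain ⟨n, hn⟩ := hv
  refine ⟨n, ?_⟩
  have key : ∀ n : ℕ, (f - c • 1) ^ n * A = A * (g - c' • 1) ^ n := by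
    intro n
    induction n with
    | zero => simp
    | succ n ih =>
      rw [pow_succ, pow_succ, mul_assoc, h, ← mul_assoc, ih, mul_assoc]
  have hkey := congrArg (fun T : Module.End ℂ V => T v) (key n)
  simp only [Module.End.mul_apply] at hkey
  rw [hkey, hn, map_zero]

lemma X_mge {μ : M} {γ : ℂ} {v : V} (hv : v ∈ S.mge μ γ) :
    S.X μ v ∈ S.mge μ (γ - 1) := by
  refine mem_mge_map ?_ hv
  have := S.N_mul_X μ
  have h1 : (γ - 1) • (1 : Module.End ℂ V) * S.X μ = γ • S.X μ - S.X μ := by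
    rw [smul_mul_assoc, one_mul, sub_smul, one_smul]
  have h2 : S.X μ * (γ • (1:Module.End ℂ V)) = γ • S.X μ := by
    rw [mul_smul_comm, mul_one]
  rw [sub_mul, mul_sub, h1, h2, this]; noncomm_ring

lemma Y_mge {μ : M} {γ : ℂ} {v : V} (hv : v ∈ S.mge μ γ) :
    S.Y μ v ∈ S.mge μ (γ + 1) := by
  refine mem_mge_map ?_ hv
  have := S.N_mul_Y μ
  have h1 : (γ + 1) • (1 : Module.End ℂ V) * S.Y μ = γ • S.Y μ + S.Y μ := by
    rw [smul_mul_assoc, one_mul, add_smul, one_smul]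
  have h2 : S.Y μ * (γ • (1:Module.End ℂ V)) = γ • S.Y μ := by
    rw [mul_smul_comm, mul_one]
  rw [sub_mul, mul_sub, h1, h2, this]; noncomm_ring

lemma comm_mge {A : Module.End ℂ V} {μ : M} (h : Commute A (S.N μ)) {γ : ℂ} {v : V}
    (hv : v ∈ S.mge μ γ) : A v ∈ S.mge μ γ := by
  refine mem_mge_map ?_ hv
  rw [sub_mul, mul_sub, h.eq, smul_mul_assoc, mul_smul_comm, one_mul, mul_one]

lemma X_mge_other {μ μ' : M} (h : μ ≠ μ') {γ : ℂ} {v : V} (hv : v ∈ S.mge μ' γ) :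
    S.X μ v ∈ S.mge μ' γ := S.comm_mge (S.commute_X_N h) hv

lemma Y_mge_other {μ μ' : M} (h : μ ≠ μ') {γ : ℂ} {v : V} (hv : v ∈ S.mge μ' γ) :
    S.Y μ v ∈ S.mge μ' γ := S.comm_mge (S.commute_Y_N h) hv

lemma mge_disjoint {μ : M} {γ γ' : ℂ} (h : γ ≠ γ') {v : V}
    (h1 : v ∈ S.mge μ γ) (h2 : v ∈ S.mge μ γ') : v = 0 :=
  Submodule.disjoint_def.mp (Module.End.disjoint_genEigenspace (S.N μ) h ⊤ ⊤) v h1 h2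

lemma mem_mge_of_apply {μ : M} {γ : ℂ} {v : V} (h : S.N μ v = γ • v) : v ∈ S.mge μ γ := by
  rw [mge, Module.End.mem_maxGenEigenspace]
  exact ⟨1, by simp [h]⟩

lemma X_inj {μ : M} {γ : ℂ} (hγ : γ ≠ 0) {v : V} (hv : v ∈ S.mge μ γ)
    (h0 : S.X μ v = 0) : v = 0 := by
  have hN : S.N μ v = (0:ℂ) • v := by
    rw [N, Module.End.mul_apply, h0, map_zero, zero_smul]
  exact S.mge_disjoint hγ hv (S.mem_mge_of_apply hN)

lemma Y_inj {μ : M} {γ : ℂ} (hγ : γ ≠ -1) {v : V} (hv : v ∈ S.mge μ γ)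
    (h0 : S.Y μ v = 0) : v = 0 := by
  have hN : S.N μ v = (-1:ℂ) • v := by
    have := congrArg (fun T : Module.End ℂ V => T v) (S.XY_eq μ)
    simp only [Module.End.mul_apply, Module.End.one_apply, LinearMap.add_apply] at this
    rw [h0, map_zero] at this
    have h3 : v + S.N μ v = 0 := by rw [← this]
    rw [neg_smul, one_smul, eq_neg_iff_add_eq_zero, add_comm]
    exact h3
  exact S.mge_disjoint hγ hv (S.mem_mge_of_apply hN)

end HSetup

namespace HSetup

variable {V : Type*} [AddCommGroup V] [Module ℂ V] {M : Type*} (S : HSetup V M)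

lemma X_pow_mge {μ : M} {γ : ℂ} {v : V} (hv : v ∈ S.mge μ γ) (p : ℕ) :
    (S.X μ ^ p) v ∈ S.mge μ (γ - p) := by
  induction p generalizing γ v with
  | zero => simpa using hv
  | succ p ih =>
    have h1 : (S.X μ ^ (p+1)) v = (S.X μ ^ p) (S.X μ v) := by
      rw [pow_succ, Module.End.mul_apply]
    have h2 := ih (S.X_mge hv)
    rw [h1]
    have : γ - 1 - (p:ℂ) = γ - (p+1:ℕ) := by push_cast; ring
    rwa [this] at h2

lemma Y_pow_mge {μ : M} {γ : ℂ} {v : V} (hv : v ∈ S.mge μ γ) (p : ℕ) :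
    (S.Y μ ^ p) v ∈ S.mge μ (γ + p) := by
  induction p generalizing γ v with
  | zero => simpa using hv
  | succ p ih =>
    have h1 : (S.Y μ ^ (p+1)) v = (S.Y μ ^ p) (S.Y μ v) := by
      rw [pow_succ, Module.End.mul_apply]
    have h2 := ih (S.Y_mge hv)
    rw [h1]
    have : γ + 1 + (p:ℂ) = γ + (p+1:ℕ) := by push_cast; ring
    rwa [this] at h2

lemma X_pow_mge_other {μ μ' : M} (h : μ ≠ μ') {γ : ℂ} {v : V} (hv : v ∈ S.mge μ' γ)
    (p : ℕ) : (S.X μ ^ p) v ∈ S.mge μ' γ := by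
  induction p with
  | zero => simpa using hv
  | succ p ih =>
    have h1 : (S.X μ ^ (p+1)) v = S.X μ ((S.X μ ^ p) v) := by
      rw [pow_succ', Module.End.mul_apply]
    rw [h1]; exact S.X_mge_other h ih

lemma Y_pow_mge_other {μ μ' : M} (h : μ ≠ μ') {γ : ℂ} {v : V} (hv : v ∈ S.mge μ' γ)
    (p : ℕ) : (S.Y μ ^ p) v ∈ S.mge μ' γ := by
  induction p with
  | zero => simpa using hv
  | succ p ih =>
    have h1 : (S.Y μ ^ (p+1)) v = S.Y μ ((S.Y μ ^ p) v) := by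
      rw [pow_succ', Module.End.mul_apply]
    rw [h1]; exact S.Y_mge_other h ih

lemma X_pow_Vg {μ : M} {k : ℤ} {v : V} (hv : v ∈ S.Vg k) (p : ℕ) :
    (S.X μ ^ p) v ∈ S.Vg (k + p * S.δ μ) := by
  induction p generalizing k v with
  | zero => simpa using hv
  | succ p ih =>
    have h1 : (S.X μ ^ (p+1)) v = (S.X μ ^ p) (S.X μ v) := by
      rw [pow_succ, Module.End.mul_apply]
    have h2 := ih (S.hGX μ k v hv)
    rw [h1]
    have : k + S.δ μ + (p:ℤ) * S.δ μ = k + ((p:ℕ)+1:ℕ) * S.δ μ := by push_cast; ring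
    rwa [this] at h2

lemma Y_pow_Vg {μ : M} {k : ℤ} {v : V} (hv : v ∈ S.Vg k) (p : ℕ) :
    (S.Y μ ^ p) v ∈ S.Vg (k - p * S.δ μ) := by
  induction p generalizing k v with
  | zero => simpa using hv
  | succ p ih =>
    have h1 : (S.Y μ ^ (p+1)) v = (S.Y μ ^ p) (S.Y μ v) := by
      rw [pow_succ, Module.End.mul_apply]
    have h2 := ih (S.hGY μ k v hv)
    rw [h1]
    have : k - S.δ μ - (p:ℤ) * S.δ μ = k - ((p:ℕ)+1:ℕ) * S.δ μ := by push_cast; ring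
    rwa [this] at h2

lemma X_pow_ne {μ : M} {γ : ℂ} {v : V} (hv : v ∈ S.mge μ γ) (hv0 : v ≠ 0) (p : ℕ)
    (hcond : ∀ t : ℕ, t < p → γ - t ≠ 0) : (S.X μ ^ p) v ≠ 0 := by
  induction p generalizing γ v with
  | zero => simpa using hv0
  | succ p ih =>
    have h1 : (S.X μ ^ (p+1)) v = (S.X μ ^ p) (S.X μ v) := by
      rw [pow_succ, Module.End.mul_apply]
    rw [h1]
    have hXv : S.X μ v ≠ 0 := by
      intro h0
      exact hv0 (S.X_inj (by simpa using hcond 0 (Nat.succ_pos p)) hv h0)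
    refine ih (S.X_mge hv) hXv ?_
    intro t ht
    have := hcond (t+1) (by omega)
    intro h0
    apply this
    rw [← h0]; push_cast; ring

lemma Y_pow_ne {μ : M} {γ : ℂ} {v : V} (hv : v ∈ S.mge μ γ) (hv0 : v ≠ 0) (p : ℕ)
    (hcond : ∀ t : ℕ, t < p → γ + t ≠ -1) : (S.Y μ ^ p) v ≠ 0 := by
  induction p generalizing γ v with
  | zero => simpa using hv0
  | succ p ih =>
    have h1 : (S.Y μ ^ (p+1)) v = (S.Y μ ^ p) (S.Y μ v) := by
      rw [pow_succ, Module.End.mul_apply]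
    rw [h1]
    have hYv : S.Y μ v ≠ 0 := by
      intro h0
      exact hv0 (S.Y_inj (by simpa using hcond 0 (Nat.succ_pos p)) hv h0)
    refine ih (S.Y_mge hv) hYv ?_
    intro t ht
    have := hcond (t+1) (by omega)
    intro h0
    apply this
    rw [← h0]; push_cast; ring

/-- Infinitely many nonzero vectors with distinct generalized eigenvalues of a number
operator cannot live in a single (finite-dimensional) graded component. -/
lemma CL {k : ℤ} (μ : M) (w : ℕ → V) (γ : ℕ → ℂ) (hγ : Function.Injective γ)
    (hw : ∀ r, w r ∈ S.Vg k) (hm : ∀ r, w r ∈ S.mge μ (γ r)) (hne : ∀ r, w r ≠ 0) :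
    False := by
  haveI := S.hfd k
  have hind : iSupIndep (fun r : ℕ => S.mge μ (γ r)) :=
    (Module.End.independent_maxGenEigenspace (S.N μ)).comp hγ
  have hli : LinearIndependent ℂ w := hind.linearIndependent _ hm hne
  set w' : ℕ → ↥(S.Vg k) := fun r => ⟨w r, hw r⟩ with hw'
  have hli' : LinearIndependent ℂ w' := by
    apply LinearIndependent.of_comp (S.Vg k).subtype
    convert hli
    rfl
  exact Module.Finite.not_linearIndependent_of_infinite w' hli'

end HSetup

namespace HSetup

variable {V : Type*} [AddCommGroup V] [Module ℂ V] {M : Type*} (S : HSetup V M)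

/-- The pair theorem: a nonzero graded joint generalized eigenvector of two number
operators has eigenvalue in `{-1,-2,...}` at the first mode or in `{0,1,2,...}` at the
second mode. -/
lemma pair {μ μ' : M} (hne : μ ≠ μ') {k : ℤ} {α β : ℂ} {v : V}
    (hVg : v ∈ S.Vg k) (hα : v ∈ S.mge μ α) (hβ : v ∈ S.mge μ' β) (hv : v ≠ 0) :
    (∃ s : ℕ, α = -1 - s) ∨ (∃ s : ℕ, β = s) := by
  by_contra hcon
  push_neg at hcon
  obtain ⟨hA, hB⟩ := hcon
  set p : ℕ := (S.δ μ).toNat with hpdef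
  set q : ℕ := (S.δ μ').toNat with hqdef
  have hp : (p : ℤ) = S.δ μ := Int.toNat_of_nonneg (le_trans zero_le_one (S.hδ μ))
  have hq : (q : ℤ) = S.δ μ' := Int.toNat_of_nonneg (le_trans zero_le_one (S.hδ μ'))
  have hq1 : 1 ≤ q := by have := S.hδ μ'; omega
  set F : V → V := fun u => (S.Y μ ^ q) ((S.X μ' ^ p) u) with hF
  set w : ℕ → V := fun r => F^[r] v with hwdef
  have key : ∀ r : ℕ, w r ∈ S.Vg k ∧ w r ∈ S.mge μ (α + (r*q : ℕ)) ∧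
      w r ∈ S.mge μ' (β - (r*p : ℕ)) ∧ w r ≠ 0 := by
    intro r
    induction r with
    | zero => simpa [hwdef] using ⟨hVg, hα, hβ, hv⟩
    | succ r ih =>
      obtain ⟨ih1, ih2, ih3, ih4⟩ := ih
      have hw1 : w (r+1) = F (w r) := Function.iterate_succ_apply' F r v
      set u := w r
      set u1 := (S.X μ' ^ p) u with hu1
      -- properties of u1
      have hu1Vg : u1 ∈ S.Vg (k + p * S.δ μ') := S.X_pow_Vg ih1 p
      have hu1β : u1 ∈ S.mge μ' (β - (r*p:ℕ) - p) := S.X_pow_mge ih3 p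
      have hu1α : u1 ∈ S.mge μ (α + (r*q:ℕ)) := S.X_pow_mge_other (Ne.symm hne) ih2 p
      have hu1ne : u1 ≠ 0 := by
        refine S.X_pow_ne ih3 ih4 p ?_
        intro t ht h0
        apply hB (r*p + t)
        have : β = ((r*p:ℕ):ℂ) + t := by
          have := sub_eq_zero.mp h0
          rw [sub_eq_iff_eq_add] at this
          rw [this]; ring
        rw [this]; push_cast; ring
      refine ⟨?_, ?_, ?_, ?_⟩
      · -- graded
        have h2 : (S.Y μ ^ q) u1 ∈ S.Vg (k + ↑p * S.δ μ' - ↑q * S.δ μ) := S.Y_pow_Vg hu1Vg q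
        have he : k + (p:ℤ) * S.δ μ' - (q:ℤ) * S.δ μ = k := by rw [hp, hq]; ring
        rw [he] at h2
        rwa [hw1]
      · -- mge μ
        have h2 : (S.Y μ ^ q) u1 ∈ S.mge μ (α + (r*q:ℕ) + q) := S.Y_pow_mge hu1α q
        have he : α + ((r*q:ℕ):ℂ) + (q:ℕ) = α + ((r+1)*q : ℕ) := by push_cast; ring
        rw [he] at h2
        rwa [hw1]
      · -- mge μ'
        have h2 : (S.Y μ ^ q) u1 ∈ S.mge μ' (β - (r*p:ℕ) - p) := S.Y_pow_mge_other hne hu1β q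
        have he : β - ((r*p:ℕ):ℂ) - (p:ℕ) = β - ((r+1)*p : ℕ) := by push_cast; ring
        rw [he] at h2
        rwa [hw1]
      · -- nonzero
        rw [hw1]
        refine S.Y_pow_ne hu1α hu1ne q ?_
        intro t ht h0
        apply hA (r*q + t)
        have : α = -1 - (((r*q:ℕ):ℂ) + t) := by
          rw [eq_sub_iff_add_eq, ← h0]; ring
        rw [this]; push_cast; ring
  -- now derive the contradiction
  refine S.CL μ w (fun r => α + (r*q : ℕ)) ?_ (fun r => (key r).1) (fun r => (key r).2.1)
    (fun r => (key r).2.2.2)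
  intro r1 r2 h
  have : ((r1*q:ℕ):ℂ) = ((r2*q:ℕ):ℂ) := by
    have := add_left_cancel h
    exact_mod_cast this
  have : r1 * q = r2 * q := by exact_mod_cast this
  exact Nat.eq_of_mul_eq_mul_right (by omega) this

/-- Eigenvector extraction on an invariant subspace of a graded component. -/
lemma exists_eig {U : Submodule ℂ V} {k : ℤ} (hle : U ≤ S.Vg k) (hU : U ≠ ⊥)
    (Nop : Module.End ℂ V) (hmap : ∀ v ∈ U, Nop v ∈ U) :
    ∃ (γ : ℂ) (v : V), v ∈ U ∧ v ≠ 0 ∧ v ∈ Nop.maxGenEigenspace γ := by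
  haveI := S.hfd k
  haveI : FiniteDimensional ℂ U := Submodule.finiteDimensional_of_le hle
  haveI : Nontrivial U := Submodule.nontrivial_iff_ne_bot.mpr hU
  set f' : Module.End ℂ U := Nop.restrict hmap with hf'
  obtain ⟨γ, hγ⟩ := Module.End.exists_eigenvalue f'
  obtain ⟨x, hx⟩ := hγ.exists_hasEigenvector
  have hx1 : f' x = γ • x := hx.apply_eq_smul
  refine ⟨γ, ↑x, x.2, by simpa using hx.right, ?_⟩
  rw [Module.End.mem_maxGenEigenspace]
  refine ⟨1, ?_⟩
  have : Nop ↑x = γ • (↑x : V) := by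
    have := congrArg (Subtype.val) hx1
    simpa [hf', LinearMap.restrict_apply] using this
  simp [pow_one, LinearMap.sub_apply, this]

end HSetup

lemma cast_ne_neg_one_sub (α : ℂ) (hα : ∃ a : ℕ, α = a) (s : ℕ) : α ≠ -1 - s := by
  obtain ⟨a, rfl⟩ := hα
  intro h
  have h2 : ((a + s + 1 : ℕ) : ℂ) = 0 := by push_cast; linear_combination h
  have := Nat.cast_eq_zero.mp h2
  omega

lemma zero_ne_neg_one_sub (s : ℕ) : (0:ℂ) ≠ -1 - s :=
  cast_ne_neg_one_sub 0 ⟨0, by norm_num⟩ s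

lemma neg_one_ne_cast (s : ℕ) : (-1:ℂ) ≠ s := by
  intro h
  have h2 : ((s + 1 : ℕ) : ℂ) = 0 := by push_cast; linear_combination -h
  have := Nat.cast_eq_zero.mp h2
  omega

namespace HSetup

variable {V : Type*} [AddCommGroup V] [Module ℂ V] {M : Type*} (S : HSetup V M)

/-- The subspace of a graded component consisting of vectors in the `0`-generalized
eigenspace of the first `n` number operators (together with two distinguished modes). -/
def Q (ν₁ ν₂ : M) (e : ℕ → M) (j : ℤ) (n : ℕ) : Submodule ℂ V :=
  S.Vg j ⊓ S.mge ν₁ 0 ⊓ S.mge ν₂ 0 ⊓ ⨅ t : Fin n, S.mge (e t) 0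

lemma Q_le_Vg (ν₁ ν₂ : M) (e : ℕ → M) (j : ℤ) (n : ℕ) : S.Q ν₁ ν₂ e j n ≤ S.Vg j :=
  le_trans inf_le_left (le_trans inf_le_left inf_le_left)

lemma mem_Q {ν₁ ν₂ : M} {e : ℕ → M} {j : ℤ} {n : ℕ} {v : V} :
    v ∈ S.Q ν₁ ν₂ e j n ↔ v ∈ S.Vg j ∧ v ∈ S.mge ν₁ 0 ∧ v ∈ S.mge ν₂ 0 ∧
      ∀ t : ℕ, t < n → v ∈ S.mge (e t) 0 := by
  simp only [Q, Submodule.mem_inf, Submodule.mem_iInf, and_assoc]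
  constructor
  · rintro ⟨h1, h2, h3, h4⟩
    exact ⟨h1, h2, h3, fun t ht => h4 ⟨t, ht⟩⟩
  · rintro ⟨h1, h2, h3, h4⟩
    exact ⟨h1, h2, h3, fun t => h4 t.1 t.2⟩

lemma Q_mono (ν₁ ν₂ : M) (e : ℕ → M) (j : ℤ) {n n' : ℕ} (h : n ≤ n') :
    S.Q ν₁ ν₂ e j n' ≤ S.Q ν₁ ν₂ e j n := by
  intro v hv
  rw [mem_Q] at hv ⊢
  exact ⟨hv.1, hv.2.1, hv.2.2.1, fun t ht => hv.2.2.2 t (lt_of_lt_of_le ht h)⟩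

lemma step (ν₁ ν₂ : M) (hνν : ν₁ ≠ ν₂) (e : ℕ → M) (n : ℕ) (j : ℤ)
    (hne : S.Q ν₁ ν₂ e j n ≠ ⊥) :
    ∃ j' : ℤ, j ≤ j' ∧ S.Q ν₁ ν₂ e j' (n+1) ≠ ⊥ := by
  -- the new number operator preserves Q
  have hNpres : ∀ (μ' : M) (γ : ℂ) (u : V), u ∈ S.mge μ' γ → S.N (e n) u ∈ S.mge μ' γ := by
    intro μ' γ u hu
    by_cases h : e n = μ'
    · subst h; exact S.comm_mge (Commute.refl _) hu
    · exact S.comm_mge (S.commute_N_N h) hu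
  have hmap : ∀ u ∈ S.Q ν₁ ν₂ e j n, S.N (e n) u ∈ S.Q ν₁ ν₂ e j n := by
    intro u hu
    rw [mem_Q] at hu ⊢
    refine ⟨?_, hNpres _ _ _ hu.2.1, hNpres _ _ _ hu.2.2.1,
      fun t ht => hNpres _ _ _ (hu.2.2.2 t ht)⟩
    have h1 : S.X (e n) u ∈ S.Vg (j + S.δ (e n)) := S.hGX _ _ _ hu.1
    have h2 : S.Y (e n) (S.X (e n) u) ∈ S.Vg (j + S.δ (e n) - S.δ (e n)) := S.hGY _ _ _ h1
    have he : j + S.δ (e n) - S.δ (e n) = j := by ring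
    rw [he] at h2
    exact h2
  obtain ⟨γ, v', hv'Q, hv'0, hv'γ⟩ :=
    S.exists_eig (S.Q_le_Vg ν₁ ν₂ e j n) hne (S.N (e n)) hmap
  have hv'mge : v' ∈ S.mge (e n) γ := hv'γ
  rw [S.mem_Q] at hv'Q
  obtain ⟨hVg, hm1, hm2, hmt⟩ := hv'Q
  -- γ is a nonnegative integer
  have hγnat : ∃ s : ℕ, γ = s := by
    by_cases h : e n = ν₁
    · refine ⟨0, ?_⟩
      subst h
      by_contra hγ0
      exact hv'0 (S.mge_disjoint (by simpa using hγ0) hv'mge hm1)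
    · rcases S.pair (Ne.symm h) hVg hm1 hv'mge hv'0 with h' | h'
      · obtain ⟨s, hs⟩ := h'
        exact absurd hs (zero_ne_neg_one_sub s)
      · exact h'
  obtain ⟨s, rfl⟩ := hγnat
  -- clean the new mode
  set w : V := (S.X (e n) ^ s) v' with hw
  have hwVg : w ∈ S.Vg (j + s * S.δ (e n)) := S.X_pow_Vg hVg s
  have hwmge : w ∈ S.mge (e n) 0 := by
    have := S.X_pow_mge hv'mge s
    simpa using this
  have hwother : ∀ μ', μ' ≠ e n → v' ∈ S.mge μ' 0 → w ∈ S.mge μ' 0 := by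
    intro μ' hμ' hv'
    exact S.X_pow_mge_other (Ne.symm hμ') hv' s
  have hwne : w ≠ 0 := by
    refine S.X_pow_ne hv'mge hv'0 s ?_
    intro t ht h0
    have : (s:ℂ) = t := by linear_combination h0
    have : s = t := by exact_mod_cast this
    omega
  refine ⟨j + s * S.δ (e n), ?_, ?_⟩
  · have h1 : (0:ℤ) ≤ s * S.δ (e n) :=
      mul_nonneg (Int.natCast_nonneg s) (le_trans zero_le_one (S.hδ (e n)))
    omega
  · rw [Submodule.ne_bot_iff]
    refine ⟨w, ?_, hwne⟩
    rw [mem_Q]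
    refine ⟨hwVg, ?_, ?_, ?_⟩
    · by_cases h : ν₁ = e n
      · rw [h]; exact hwmge
      · exact hwother ν₁ h hm1
    · by_cases h : ν₂ = e n
      · rw [h]; exact hwmge
      · exact hwother ν₂ h hm2
    · intro t ht
      by_cases h : e t = e n
      · rw [h]; exact hwmge
      · rcases Nat.lt_succ_iff_lt_or_eq.mp ht with ht' | ht'
        · exact hwother (e t) h (hmt t ht')
        · exact absurd (by rw [ht']) h

end HSetup

namespace HSetup

variable {V : Type*} [AddCommGroup V] [Module ℂ V] {M : Type*} (S : HSetup V M)

theorem mainPlus {ν₁ ν₂ : M} (hνν : ν₁ ≠ ν₂) (hδν₁ : S.δ ν₁ = 1)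
    (e : ℕ → M) (he : Function.Surjective e)
    {k₀ : ℤ} {v₀ : V} (h0 : v₀ ≠ 0) (hVg0 : v₀ ∈ S.Vg k₀) (hm1 : v₀ ∈ S.mge ν₁ 0)
    (hm2 : v₀ ∈ S.mge ν₂ 0) :
    ∃ (k : ℤ) (v : V), v ∈ S.Vg k ∧ v ≠ 0 ∧ ∀ μ, S.X μ v = 0 := by
  classical
  have base : S.Q ν₁ ν₂ e k₀ 0 ≠ ⊥ := by
    rw [Submodule.ne_bot_iff]
    refine ⟨v₀, ?_, h0⟩
    rw [mem_Q]
    exact ⟨hVg0, hm1, hm2, fun t ht => absurd ht (Nat.not_lt_zero t)⟩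
  -- build the chain
  let chain : ∀ n : ℕ, {j : ℤ // S.Q ν₁ ν₂ e j n ≠ ⊥} := fun n =>
    Nat.rec ⟨k₀, base⟩
      (fun n ih => ⟨(S.step ν₁ ν₂ hνν e n ih.1 ih.2).choose,
        (S.step ν₁ ν₂ hνν e n ih.1 ih.2).choose_spec.2⟩) n
  set j : ℕ → ℤ := fun n => (chain n).1 with hj
  have hQn : ∀ n, S.Q ν₁ ν₂ e (j n) n ≠ ⊥ := fun n => (chain n).2
  have hstep : ∀ n, j n ≤ j (n+1) := by
    intro n
    exact (S.step ν₁ ν₂ hνν e n (j n) (chain n).2).choose_spec.1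
  have jmono : Monotone j := monotone_nat_of_le_succ hstep
  by_cases hstab : ∃ n₀ : ℕ, ∀ n, n₀ ≤ n → j n = j n₀
  · -- stable case : extract a highest weight vector
    obtain ⟨n₀, hn₀⟩ := hstab
    set Qs : ℕ → Submodule ℂ V := fun m => S.Q ν₁ ν₂ e (j n₀) m with hQs
    have hQsne : ∀ m, n₀ ≤ m → Qs m ≠ ⊥ := by
      intro m hm
      have := hQn m
      rwa [hn₀ m hm] at this
    haveI hfdQ : ∀ m, FiniteDimensional ℂ (Qs m) := by
      intro m
      haveI := S.hfd (j n₀)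
      exact Submodule.finiteDimensional_of_le (S.Q_le_Vg ν₁ ν₂ e (j n₀) m)
    have hex : ∃ d : ℕ, ∃ i : ℕ, Module.finrank ℂ (Qs (n₀ + i)) = d :=
      ⟨Module.finrank ℂ (Qs (n₀ + 0)), 0, rfl⟩
    obtain ⟨i₀, hi₀⟩ := Nat.find_spec hex
    have hmin : ∀ i : ℕ, Nat.find hex ≤ Module.finrank ℂ (Qs (n₀ + i)) := by
      intro i
      exact Nat.find_min' hex ⟨i, rfl⟩
    set m₁ : ℕ := n₀ + i₀ with hm₁
    have hQeq : ∀ m, m₁ ≤ m → Qs m = Qs m₁ := by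
      intro m hm
      refine Submodule.eq_of_le_of_finrank_le (S.Q_mono ν₁ ν₂ e (j n₀) hm) ?_
      rw [hi₀]
      have : m = n₀ + (m - n₀) := by omega
      rw [this]
      exact hmin (m - n₀)
    obtain ⟨v, hvQ, hv0⟩ := Submodule.ne_bot_iff _ |>.mp (hQsne m₁ (by omega))
    rw [mem_Q] at hvQ
    obtain ⟨hvVg, hv1, hv2, hv3⟩ := hvQ
    have hvall : ∀ t : ℕ, v ∈ S.mge (e t) 0 := by
      intro t
      have h1 : v ∈ Qs (m₁ + t + 1) := by
        rw [hQeq (m₁ + t + 1) (by omega)]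
        rw [mem_Q]
        exact ⟨hvVg, hv1, hv2, hv3⟩
      rw [mem_Q] at h1
      exact h1.2.2.2 t (by omega)
    refine ⟨j n₀, v, hvVg, hv0, ?_⟩
    intro μ
    obtain ⟨t, rfl⟩ := he μ
    have hμ0 : v ∈ S.mge (e t) 0 := hvall t
    by_contra hX0
    -- pick a second mode distinct from `e t`
    obtain ⟨μ', hμ'ne, hμ'0⟩ : ∃ μ', μ' ≠ e t ∧ v ∈ S.mge μ' 0 := by
      by_cases h : e t = ν₁
      · exact ⟨ν₂, by rw [← h] at hνν; exact fun hh => hνν hh.symm, hv2⟩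
      · exact ⟨ν₁, fun hh => h hh.symm, hv1⟩
    have hw1 : S.X (e t) v ∈ S.mge (e t) (-1 : ℂ) := by
      have := S.X_mge hμ0
      simpa using this
    have hw2 : S.X (e t) v ∈ S.mge μ' 0 := S.X_mge_other (Ne.symm hμ'ne) hμ'0
    have hwVg : S.X (e t) v ∈ S.Vg (j n₀ + S.δ (e t)) := S.hGX _ _ _ hvVg
    rcases S.pair hμ'ne hwVg hw2 hw1 hX0 with h' | h'
    · obtain ⟨s, hs⟩ := h'
      exact zero_ne_neg_one_sub s hs
    · obtain ⟨s, hs⟩ := h'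
      exact neg_one_ne_cast s hs
  · -- unstable case : impossible
    exfalso
    push_neg at hstab
    have hgrow : ∀ n₀ : ℕ, ∃ n, j n₀ < j n := by
      intro n₀
      obtain ⟨n, hn1, hn2⟩ := hstab n₀
      exact ⟨n, lt_of_le_of_ne (jmono hn1) (Ne.symm hn2)⟩
    let φ : ℕ → ℕ := fun r => Nat.rec 0 (fun _ ih => (hgrow ih).choose) r
    have hφ : ∀ r, j (φ r) < j (φ (r+1)) := by
      intro r
      exact (hgrow (φ r)).choose_spec
    have jφstrict : StrictMono (fun r => j (φ r)) := strictMono_nat_of_lt_succ hφ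
    have hjge : ∀ r, j 0 ≤ j (φ r) := by
      intro r
      induction r with
      | zero => exact jmono (Nat.zero_le _)
      | succ r ih => exact le_trans ih (le_of_lt (hφ r))
    set t : ℕ → ℕ := fun r => (j (φ r) - j 0).toNat with ht
    have htz : ∀ r, (t r : ℤ) = j (φ r) - j 0 := by
      intro r
      have := hjge r
      exact Int.toNat_of_nonneg (by omega)
    have tstrict : StrictMono t := by
      intro r r' hrr
      have h1 : j (φ r) < j (φ r') := jφstrict hrr
      have h2 := htz r
      have h3 := htz r'
      omega
    -- witnesses
    have hwit : ∀ r : ℕ, ∃ u : V, u ∈ S.Q ν₁ ν₂ e (j (φ r)) (φ r) ∧ u ≠ 0 := by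
      intro r
      obtain ⟨u, hu1, hu2⟩ := Submodule.ne_bot_iff _ |>.mp (hQn (φ r))
      exact ⟨u, hu1, hu2⟩
    set u : ℕ → V := fun r => (hwit r).choose with hu
    have huQ : ∀ r, u r ∈ S.Q ν₁ ν₂ e (j (φ r)) (φ r) := fun r => (hwit r).choose_spec.1
    have hune : ∀ r, u r ≠ 0 := fun r => (hwit r).choose_spec.2
    set w : ℕ → V := fun r => (S.Y ν₁ ^ (t r)) (u r) with hwd
    have hwVg : ∀ r, w r ∈ S.Vg (j 0) := by
      intro r
      have h1 : u r ∈ S.Vg (j (φ r)) := (S.mem_Q.mp (huQ r)).1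
      have h2 := S.Y_pow_Vg (μ := ν₁) h1 (t r)
      have he : j (φ r) - (t r : ℤ) * S.δ ν₁ = j 0 := by
        rw [hδν₁]
        have := htz r
        omega
      rwa [he] at h2
    have hwmge : ∀ r, w r ∈ S.mge ν₁ ((t r : ℂ)) := by
      intro r
      have h1 : u r ∈ S.mge ν₁ 0 := (S.mem_Q.mp (huQ r)).2.1
      have h2 := S.Y_pow_mge h1 (t r)
      simpa using h2
    have hwne : ∀ r, w r ≠ 0 := by
      intro r
      have h1 : u r ∈ S.mge ν₁ 0 := (S.mem_Q.mp (huQ r)).2.1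
      refine S.Y_pow_ne h1 (hune r) (t r) ?_
      intro s hs h0
      have : ((s:ℂ)) = -1 := by linear_combination h0
      exact neg_one_ne_cast s this.symm
    exact S.CL ν₁ w (fun r => ((t r : ℕ) : ℂ))
      (fun r1 r2 h => tstrict.injective (Nat.cast_injective h)) hwVg hwmge hwne

end HSetup

namespace HSetup

variable {V : Type*} [AddCommGroup V] [Module ℂ V] {M : Type*} (S : HSetup V M)

/-- The transposed setup, exchanging raising and lowering operators. -/
def transpose : HSetup V M where
  Vg := fun k => S.Vg (-k)
  δ := S.δ
  X := fun μ => -S.Y μ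
  Y := fun μ => S.X μ
  hfd := fun k => S.hfd (-k)
  hδ := S.hδ
  hW := by
    intro μ
    have h := S.hW μ
    rw [neg_mul, mul_neg, sub_neg_eq_add, ← h]
    noncomm_ring
  hCXX := fun μ μ' h => ((S.hCYY h).neg_left).neg_right
  hCXY := fun μ μ' h => ((S.hCXY h.symm).symm).neg_left
  hCYY := fun μ μ' h => S.hCXX h
  hGX := by
    intro μ k v hv
    have h1 : S.Y μ v ∈ S.Vg (-k - S.δ μ) := S.hGY μ (-k) v hv
    have he : -k - S.δ μ = -(k + S.δ μ) := by ring
    rw [he] at h1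
    simpa using Submodule.neg_mem _ h1
  hGY := by
    intro μ k v hv
    have h1 : S.X μ v ∈ S.Vg (-k + S.δ μ) := S.hGX μ (-k) v hv
    have he : -k + S.δ μ = -(k - S.δ μ) := by ring
    rwa [he] at h1

lemma transpose_N (μ : M) : S.transpose.N μ = -(1 + S.N μ) := by
  show S.X μ * (-S.Y μ) = -(1 + S.N μ)
  rw [mul_neg, XY_eq]

lemma transpose_mge (μ : M) (γ : ℂ) : S.transpose.mge μ γ = S.mge μ (-1 - γ) := by
  apply Submodule.ext
  intro v
  rw [mge, mge, Module.End.mem_maxGenEigenspace, Module.End.mem_maxGenEigenspace]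
  have hA : S.transpose.N μ - γ • (1 : Module.End ℂ V) =
      (-1 : ℂ) • (S.N μ - (-1 - γ) • (1 : Module.End ℂ V)) := by
    rw [transpose_N]
    module
  have key : ∀ n : ℕ, (S.transpose.N μ - γ • (1 : Module.End ℂ V)) ^ n =
      ((-1:ℂ)^n) • (S.N μ - (-1 - γ) • (1 : Module.End ℂ V)) ^ n := by
    intro n
    rw [hA, smul_pow]
  constructor
  · rintro ⟨n, hn⟩
    refine ⟨n, ?_⟩
    rw [key n] at hn
    rw [LinearMap.smul_apply] at hn
    have := smul_eq_zero.mp hn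
    rcases this with h | h
    · exact absurd h (pow_ne_zero n (by norm_num))
    · exact h
  · rintro ⟨n, hn⟩
    refine ⟨n, ?_⟩
    rw [key n, LinearMap.smul_apply, hn, smul_zero]

end HSetup

namespace HSetup

variable {V : Type*} [AddCommGroup V] [Module ℂ V] {M : Type*} (S : HSetup V M)

theorem mainPlus' {ν₁ ν₂ : M} (hνν : ν₁ ≠ ν₂) (hδν₁ : S.δ ν₁ = 1)
    (e : ℕ → M) (he : Function.Surjective e)
    {k₀ : ℤ} {v₂ : V} (hv₂0 : v₂ ≠ 0) (hVg : v₂ ∈ S.Vg k₀) {a b : ℕ}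
    (hα : v₂ ∈ S.mge ν₁ (a : ℂ)) (hβ : v₂ ∈ S.mge ν₂ (b : ℂ)) :
    ∃ (k : ℤ) (v : V), v ∈ S.Vg k ∧ v ≠ 0 ∧ ∀ μ, S.X μ v = 0 := by
  have natne : ∀ (c : ℕ) (t : ℕ), t < c → (c:ℂ) - t ≠ 0 := by
    intro c t ht h0
    have : (c:ℂ) = t := by linear_combination h0
    have : c = t := by exact_mod_cast this
    omega
  set w1 : V := (S.X ν₁ ^ a) v₂ with hw1
  have hw1Vg : w1 ∈ S.Vg (k₀ + a * S.δ ν₁) := S.X_pow_Vg hVg a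
  have hw1α : w1 ∈ S.mge ν₁ 0 := by
    have := S.X_pow_mge hα a
    simpa using this
  have hw1β : w1 ∈ S.mge ν₂ (b:ℂ) := S.X_pow_mge_other hνν hβ a
  have hw1ne : w1 ≠ 0 := S.X_pow_ne hα hv₂0 a (natne a)
  set w : V := (S.X ν₂ ^ b) w1 with hw
  have hwVg : w ∈ S.Vg (k₀ + a * S.δ ν₁ + b * S.δ ν₂) := S.X_pow_Vg hw1Vg b
  have hwβ : w ∈ S.mge ν₂ 0 := by
    have := S.X_pow_mge hw1β b
    simpa using this
  have hwα : w ∈ S.mge ν₁ 0 := S.X_pow_mge_other (Ne.symm hνν) hw1α b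
  have hwne : w ≠ 0 := S.X_pow_ne hw1β hw1ne b (natne b)
  exact S.mainPlus hνν hδν₁ e he hwne hwVg hwα hwβ

theorem absMain {ν₁ ν₂ : M} (hνν : ν₁ ≠ ν₂) (hδν₁ : S.δ ν₁ = 1)
    (e : ℕ → M) (he : Function.Surjective e) {k₀ : ℤ} (hk₀ : S.Vg k₀ ≠ ⊥) :
    (∃ (k : ℤ) (v : V), v ∈ S.Vg k ∧ v ≠ 0 ∧ ∀ μ, S.X μ v = 0) ∨
    (∃ (k : ℤ) (v : V), v ∈ S.Vg k ∧ v ≠ 0 ∧ ∀ μ, S.Y μ v = 0) := by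
  -- Step A : generalized eigenvector for the first number operator
  have hmap1 : ∀ v ∈ S.Vg k₀, S.N ν₁ v ∈ S.Vg k₀ := by
    intro u hu
    have h1 := S.hGY ν₁ _ _ (S.hGX ν₁ k₀ u hu)
    have he' : k₀ + S.δ ν₁ - S.δ ν₁ = k₀ := by ring
    rwa [he'] at h1
  obtain ⟨α, v₁, hv₁U, hv₁0, hv₁γ⟩ := S.exists_eig (le_refl (S.Vg k₀)) hk₀ (S.N ν₁) hmap1
  -- Step B : refine inside the generalized eigenspace
  set U₂ : Submodule ℂ V := S.Vg k₀ ⊓ S.mge ν₁ α with hU₂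
  have hU₂ne : U₂ ≠ ⊥ := by
    rw [Submodule.ne_bot_iff]
    exact ⟨v₁, ⟨hv₁U, hv₁γ⟩, hv₁0⟩
  have hmap2 : ∀ v ∈ U₂, S.N ν₂ v ∈ U₂ := by
    rintro u ⟨hu1, hu2⟩
    have h1 : S.N ν₂ u ∈ S.Vg k₀ := by
      have h1 := S.hGY ν₂ _ _ (S.hGX ν₂ k₀ u hu1)
      have he' : k₀ + S.δ ν₂ - S.δ ν₂ = k₀ := by ring
      rwa [he'] at h1
    exact ⟨h1, S.comm_mge (S.commute_N_N (Ne.symm hνν)) hu2⟩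
  obtain ⟨β, v₂, hv₂U, hv₂0, hv₂γ⟩ := S.exists_eig (inf_le_left : U₂ ≤ S.Vg k₀) hU₂ne
    (S.N ν₂) hmap2
  obtain ⟨hv₂Vg, hv₂α⟩ := hv₂U
  have hv₂β : v₂ ∈ S.mge ν₂ β := hv₂γ
  have P1 := S.pair hνν hv₂Vg hv₂α hv₂β hv₂0
  have P2 := S.pair (Ne.symm hνν) hv₂Vg hv₂β hv₂α hv₂0
  rcases P1 with ⟨s1, hα1⟩ | ⟨b, hβ1⟩
  · rcases P2 with ⟨s2, hβ2⟩ | ⟨a, hα2⟩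
    · -- lowest weight case via the transposed setup
      right
      set T := S.transpose with hT
      have hαT : v₂ ∈ T.mge ν₁ (s1 : ℂ) := by
        rw [S.transpose_mge]
        rwa [← hα1]
      have hβT : v₂ ∈ T.mge ν₂ (s2 : ℂ) := by
        rw [S.transpose_mge]
        rwa [← hβ2]
      have hVgT : v₂ ∈ T.Vg (-k₀) := by
        show v₂ ∈ S.Vg (-(-k₀))
        rwa [neg_neg]
      obtain ⟨k, v, hvVg, hv0, hXall⟩ :=
        T.mainPlus' hνν hδν₁ e he hv₂0 hVgT hαT hβT
      refine ⟨-k, v, hvVg, hv0, ?_⟩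
      intro μ
      have := hXall μ
      have h2 : -(S.Y μ v) = 0 := this
      simpa using h2
    · exact absurd hα1 (Ne.symm (fun h => cast_ne_neg_one_sub α ⟨a, hα2⟩ s1 hα1))
  · rcases P2 with ⟨s2, hβ2⟩ | ⟨a, hα2⟩
    · exact absurd hβ2 (cast_ne_neg_one_sub β ⟨b, hβ1⟩ s2)
    · -- highest weight case
      left
      rw [hα2] at hv₂α
      rw [hβ1] at hv₂β
      exact S.mainPlus' hνν hδν₁ e he hv₂0 hv₂Vg hv₂α hv₂β

end HSetup

/-- (Futorny) Let `H` be a finite-dimensional complex vector space with a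
nondegenerate symmetric bilinear form `(,)`, and let the Heisenberg Lie
algebra `L(H) = H ⊗ ℂ[t,t^{−1}] ⊕ ℂc` act on a nonzero `ℤ`-graded vector
space `V` with finite-dimensional graded components, the central element `c`
acting by a nonzero scalar `z`.  Encoding the action of `h ⊗ t^m` by the
operator `op m h`, linear in `h`, satisfying the Heisenberg commutation
relation and shifting degrees by `m`, `V` contains a nonzero graded vector
annihilated by all `H ⊗ t^m` with `m > 0`, or one annihilated by all
`H ⊗ t^m` with `m < 0`. -/
theorem heisenberg_graded_module_has_highest_or_lowest_vector
    (H V : Type*) [AddCommGroup H] [Module ℂ H] [FiniteDimensional ℂ H]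
    [AddCommGroup V] [Module ℂ V] [Nontrivial V]
    (B : H →ₗ[ℂ] H →ₗ[ℂ] ℂ)
    (hBsymm : ∀ h h', B h h' = B h' h)
    (hBnd : ∀ h : H, h ≠ 0 → ∃ h', B h h' ≠ 0)
    (op : ℤ → H →ₗ[ℂ] Module.End ℂ V)
    (z : ℂ) (hz : z ≠ 0)
    (hcomm : ∀ (m ℓ : ℤ) (h h' : H),
      op m h * op ℓ h' - op ℓ h' * op m h =
        if m + ℓ = 0 then ((B h h') * (m : ℂ) * z) • (1 : Module.End ℂ V)
        else 0)
    (Vg : ℤ → Submodule ℂ V)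
    (hint : DirectSum.IsInternal Vg)
    (hfd : ∀ k, FiniteDimensional ℂ (Vg k))
    (hgr : ∀ (m : ℤ) (h : H) (k : ℤ), ∀ v ∈ Vg k, op m h v ∈ Vg (k + m)) :
    (∃ k : ℤ, ∃ v ∈ Vg k, v ≠ 0 ∧ ∀ m : ℤ, 0 < m → ∀ h : H, op m h v = 0) ∨
    (∃ k : ℤ, ∃ v ∈ Vg k, v ≠ 0 ∧ ∀ m : ℤ, m < 0 → ∀ h : H, op m h v = 0) := by
  classical
  -- there is a nonzero graded component
  have hex : ∃ k₀ : ℤ, Vg k₀ ≠ ⊥ := by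
    by_contra hc
    push_neg at hc
    have h1 : (⊤ : Submodule ℂ V) = ⊥ := by
      rw [← hint.submodule_iSup_eq_top]
      exact iSup_eq_bot.mpr hc
    obtain ⟨x, hx⟩ := exists_ne (0 : V)
    exact hx ((Submodule.eq_bot_iff _).mp h1 x trivial)
  obtain ⟨k₀, hk₀⟩ := hex
  by_cases hH : Subsingleton H
  · -- degenerate case H = 0
    left
    obtain ⟨v, hv, hv0⟩ := Submodule.ne_bot_iff _ |>.mp hk₀
    refine ⟨k₀, v, hv, hv0, ?_⟩
    intro m hm h
    rw [Subsingleton.elim h (0:H), map_zero]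
    rfl
  · haveI : Nontrivial H := not_subsingleton_iff_nontrivial.mp hH
    haveI : Invertible (2:ℂ) := invertibleOfNonzero two_ne_zero
    have hBsym' : B.IsSymm := ⟨fun x y => hBsymm x y⟩
    obtain ⟨bas, hbas⟩ := LinearMap.BilinForm.exists_orthogonal_basis hBsym'
    have hdiag : ∀ i, B (bas i) (bas i) ≠ 0 := by
      intro i h0
      obtain ⟨h', hh'⟩ := hBnd (bas i) (bas.ne_zero i)
      apply hh'
      have hz' : B (bas i) = 0 := by
        apply bas.ext
        intro j
        by_cases hij : j = i
        · rw [hij, h0]; rfl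
        · rw [LinearMap.isOrthoᵢ_def.mp hbas i j (fun hh => hij hh.symm)]; rfl
      rw [hz']
      rfl
    -- set up the abstract Heisenberg data
    have hpos : 0 < Module.finrank ℂ H := Module.finrank_pos
    set i₀ : Fin (Module.finrank ℂ H) := ⟨0, hpos⟩ with hi₀
    set c : (Fin (Module.finrank ℂ H) × ℕ) → ℂ :=
      fun μ => B (bas μ.1) (bas μ.1) * (((μ.2 : ℤ) + 1 : ℤ) : ℂ) * z with hcdef
    have hc : ∀ μ, c μ ≠ 0 := by
      intro μ
      refine mul_ne_zero (mul_ne_zero (hdiag μ.1) ?_) hz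
      rw [Int.cast_ne_zero]
      omega
    let S : HSetup V (Fin (Module.finrank ℂ H) × ℕ) :=
      { Vg := Vg
        δ := fun μ => (μ.2 : ℤ) + 1
        X := fun μ => op ((μ.2 : ℤ) + 1) (bas μ.1)
        Y := fun μ => (c μ)⁻¹ • op (-((μ.2 : ℤ) + 1)) (bas μ.1)
        hfd := hfd
        hδ := fun μ => by show (1:ℤ) ≤ (μ.2:ℤ) + 1; omega
        hW := by
          intro μ
          have h := hcomm ((μ.2 : ℤ) + 1) (-((μ.2 : ℤ) + 1)) (bas μ.1) (bas μ.1)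
          rw [if_pos (by ring)] at h
          rw [mul_smul_comm, smul_mul_assoc, ← smul_sub, h, smul_smul,
            inv_mul_cancel₀ (hc μ), one_smul]
        hCXX := by
          intro μ μ' hne
          have h := hcomm ((μ.2 : ℤ) + 1) ((μ'.2 : ℤ) + 1) (bas μ.1) (bas μ'.1)
          rw [if_neg (by omega)] at h
          exact sub_eq_zero.mp h
        hCXY := by
          intro μ μ' hne
          apply Commute.smul_right
          have h := hcomm ((μ.2 : ℤ) + 1) (-((μ'.2 : ℤ) + 1)) (bas μ.1) (bas μ'.1)
          by_cases hdd : ((μ.2 : ℤ) + 1) + (-((μ'.2 : ℤ) + 1)) = 0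
          · have h2 : μ.2 = μ'.2 := by omega
            have h1 : μ.1 ≠ μ'.1 := fun hh => hne (Prod.ext hh h2)
            rw [if_pos hdd, LinearMap.isOrthoᵢ_def.mp hbas _ _ h1, zero_mul, zero_mul,
              zero_smul] at h
            exact sub_eq_zero.mp h
          · rw [if_neg hdd] at h
            exact sub_eq_zero.mp h
        hCYY := by
          intro μ μ' hne
          have h := hcomm (-((μ.2 : ℤ) + 1)) (-((μ'.2 : ℤ) + 1)) (bas μ.1) (bas μ'.1)
          rw [if_neg (by omega)] at h
          have hc' : Commute (op (-((μ.2 : ℤ) + 1)) (bas μ.1))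
              (op (-((μ'.2 : ℤ) + 1)) (bas μ'.1)) := sub_eq_zero.mp h
          exact (hc'.smul_left _).smul_right _
        hGX := fun μ k v hv => hgr ((μ.2 : ℤ) + 1) (bas μ.1) k v hv
        hGY := by
          intro μ k v hv
          have h1 := hgr (-((μ.2 : ℤ) + 1)) (bas μ.1) k v hv
          have he : k + -((μ.2 : ℤ) + 1) = k - ((μ.2 : ℤ) + 1) := by ring
          rw [he] at h1
          rw [LinearMap.smul_apply]
          exact Submodule.smul_mem _ _ h1 }
    have hνν : (i₀, 0) ≠ (i₀, 1) := by
      intro hh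
      have := congrArg Prod.snd hh
      simp at this
    have hδν₁ : S.δ (i₀, 0) = 1 := by norm_num
    haveI : Nonempty (Fin (Module.finrank ℂ H) × ℕ) := ⟨(i₀, 0)⟩
    obtain ⟨e, he⟩ := exists_surjective_nat (Fin (Module.finrank ℂ H) × ℕ)
    rcases S.absMain hνν hδν₁ e he hk₀ with ⟨k, v, hvVg, hv0, hXall⟩ |
      ⟨k, v, hvVg, hv0, hYall⟩
    · left
      refine ⟨k, v, hvVg, hv0, ?_⟩
      intro m hm h
      have hbas0 : ∀ i, op m (bas i) v = 0 := by
        intro i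
        have hcast : (((m - 1).toNat : ℤ) + 1) = m := by omega
        rw [← hcast]
        exact hXall (i, (m - 1).toNat)
      let φ : H →ₗ[ℂ] V :=
        { toFun := fun h' => op m h' v
          map_add' := fun a b => by
            show op m (a + b) v = op m a v + op m b v
            rw [map_add, LinearMap.add_apply]
          map_smul' := fun r a => by
            show op m (r • a) v = r • (op m a v)
            rw [map_smul, LinearMap.smul_apply] }
      have hφ : φ = 0 := bas.ext fun i => by simpa [φ] using hbas0 i
      have := congrArg (fun ψ : H →ₗ[ℂ] V => ψ h) hφ
      simpa [φ] using this
    · right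
      refine ⟨k, v, hvVg, hv0, ?_⟩
      intro m hm h
      have hbas0 : ∀ i, op m (bas i) v = 0 := by
        intro i
        have hY := hYall (i, (-m - 1).toNat)
        have hY2 : (c (i, (-m - 1).toNat))⁻¹ •
            op (-(((-m - 1).toNat : ℤ) + 1)) (bas i) v = 0 := hY
        have hcast : (-((((-m - 1).toNat : ℤ)) + 1)) = m := by omega
        rw [hcast] at hY2
        rcases smul_eq_zero.mp hY2 with h' | h'
        · exact absurd h' (inv_ne_zero (hc _))
        · exact h'
      let φ : H →ₗ[ℂ] V :=
        { toFun := fun h' => op m h' v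
          map_add' := fun a b => by
            show op m (a + b) v = op m a v + op m b v
            rw [map_add, LinearMap.add_apply]
          map_smul' := fun r a => by
            show op m (r • a) v = r • (op m a v)
            rw [map_smul, LinearMap.smul_apply] }
      have hφ : φ = 0 := bas.ext fun i => by simpa [φ] using hbas0 i
      have := congrArg (fun ψ : H →ₗ[ℂ] V => ψ h) hφ
      simpa [φ] using this
end
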